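/- Define φ : ℝ³ → ℝ⁶ by φ(x,y,z) = (1/√3)·(cos(√3·x), sin(√3·x), cos(√3·y), sin(√3·y), cos(√3·z), sin(√3·z)). Let w = (a,b,c) ∈ ℝ³ be a unit vector with a + b + c = 0. Then for every p ∈ ℝ³ and every t ∈ ℝ, the second derivative of the curve s ↦ φ(p + s·w) at s = t has Euclidean norm exactly √(3/2). (More generally, for an arbitrary unit vector w = (a,b,c), this norm equals √(3·(a⁴ + b⁴ + c⁴)).) -/

import Mathlib

open Real

/-- The map `φ : ℝ³ → ℝ⁶`,
`φ(x,y,z) = (1/√3)(cos(√3 x), sin(√3 x), cos(√3 y), sin(√3 y), cos(√3 z), sin(√3 z))`,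
whose image is the Clifford torus in `S⁵ ⊂ ℝ⁶`. -/
noncomputable def cliffordMap : EuclideanSpace ℝ (Fin 3) → EuclideanSpace ℝ (Fin 6) :=
  fun v => (WithLp.equiv 2 (Fin 6 → ℝ)).symm
    ![(1 / Real.sqrt 3) * Real.cos (Real.sqrt 3 * v 0),
      (1 / Real.sqrt 3) * Real.sin (Real.sqrt 3 * v 0),
      (1 / Real.sqrt 3) * Real.cos (Real.sqrt 3 * v 1),
      (1 / Real.sqrt 3) * Real.sin (Real.sqrt 3 * v 1),
      (1 / Real.sqrt 3) * Real.cos (Real.sqrt 3 * v 2),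
      (1 / Real.sqrt 3) * Real.sin (Real.sqrt 3 * v 2)]

noncomputable def cliffordD1 (p w : EuclideanSpace ℝ (Fin 3)) : ℝ → EuclideanSpace ℝ (Fin 6) :=
  fun s => (WithLp.equiv 2 (Fin 6 → ℝ)).symm
    ![-(w 0) * Real.sin (Real.sqrt 3 * (p 0 + s * w 0)),
      (w 0) * Real.cos (Real.sqrt 3 * (p 0 + s * w 0)),
      -(w 1) * Real.sin (Real.sqrt 3 * (p 1 + s * w 1)),
      (w 1) * Real.cos (Real.sqrt 3 * (p 1 + s * w 1)),
      -(w 2) * Real.sin (Real.sqrt 3 * (p 2 + s * w 2)),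
      (w 2) * Real.cos (Real.sqrt 3 * (p 2 + s * w 2))]

noncomputable def cliffordD2 (p w : EuclideanSpace ℝ (Fin 3)) : ℝ → EuclideanSpace ℝ (Fin 6) :=
  fun s => (WithLp.equiv 2 (Fin 6 → ℝ)).symm
    ![-(Real.sqrt 3) * (w 0)^2 * Real.cos (Real.sqrt 3 * (p 0 + s * w 0)),
      -(Real.sqrt 3) * (w 0)^2 * Real.sin (Real.sqrt 3 * (p 0 + s * w 0)),
      -(Real.sqrt 3) * (w 1)^2 * Real.cos (Real.sqrt 3 * (p 1 + s * w 1)),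
      -(Real.sqrt 3) * (w 1)^2 * Real.sin (Real.sqrt 3 * (p 1 + s * w 1)),
      -(Real.sqrt 3) * (w 2)^2 * Real.cos (Real.sqrt 3 * (p 2 + s * w 2)),
      -(Real.sqrt 3) * (w 2)^2 * Real.sin (Real.sqrt 3 * (p 2 + s * w 2))]

lemma vec6_five {α : Type*} (a b c d e f : α) : ![a, b, c, d, e, f] 5 = f := rfl

lemma sqrt3_ne : (Real.sqrt 3) ≠ 0 := by positivity

lemma hasDerivAt_inner (c d t : ℝ) :
    HasDerivAt (fun s : ℝ => Real.sqrt 3 * (c + s * d)) (Real.sqrt 3 * d) t :=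
  by simpa using (((hasDerivAt_id t).mul_const d).const_add c).const_mul (Real.sqrt 3)

lemma aux_cos (c d t : ℝ) :
    HasDerivAt (fun s : ℝ => (1 / Real.sqrt 3) * Real.cos (Real.sqrt 3 * (c + s * d)))
      (-d * Real.sin (Real.sqrt 3 * (c + t * d))) t := by
  have h := ((Real.hasDerivAt_cos (Real.sqrt 3 * (c + t * d))).comp t
    (hasDerivAt_inner c d t)).const_mul (1 / Real.sqrt 3)
  refine h.congr_deriv ?_
  field_simp

lemma aux_sin (c d t : ℝ) :
    HasDerivAt (fun s : ℝ => (1 / Real.sqrt 3) * Real.sin (Real.sqrt 3 * (c + s * d)))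
      (d * Real.cos (Real.sqrt 3 * (c + t * d))) t := by
  have h := ((Real.hasDerivAt_sin (Real.sqrt 3 * (c + t * d))).comp t
    (hasDerivAt_inner c d t)).const_mul (1 / Real.sqrt 3)
  refine h.congr_deriv ?_
  field_simp

lemma aux2_sin (c d t : ℝ) :
    HasDerivAt (fun s : ℝ => -d * Real.sin (Real.sqrt 3 * (c + s * d)))
      (-(Real.sqrt 3) * d^2 * Real.cos (Real.sqrt 3 * (c + t * d))) t := by
  have h := ((Real.hasDerivAt_sin (Real.sqrt 3 * (c + t * d))).comp t
    (hasDerivAt_inner c d t)).const_mul (-d)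
  refine h.congr_deriv ?_
  ring

lemma aux2_cos (c d t : ℝ) :
    HasDerivAt (fun s : ℝ => d * Real.cos (Real.sqrt 3 * (c + s * d)))
      (-(Real.sqrt 3) * d^2 * Real.sin (Real.sqrt 3 * (c + t * d))) t := by
  have h := ((Real.hasDerivAt_cos (Real.sqrt 3 * (c + t * d))).comp t
    (hasDerivAt_inner c d t)).const_mul d
  refine h.congr_deriv ?_
  ring

lemma coord_eq (p w : EuclideanSpace ℝ (Fin 3)) (s : ℝ) (i : Fin 3) :
    (p + s • w) i = p i + s * w i := rfl

lemma hasDerivAt_curve (p w : EuclideanSpace ℝ (Fin 3)) (t : ℝ) :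
    HasDerivAt (fun s : ℝ => cliffordMap (p + s • w)) (cliffordD1 p w t) t := by
  have key : HasDerivAt
      (fun s : ℝ => (WithLp.equiv 2 (Fin 6 → ℝ)) (cliffordMap (p + s • w)))
      ((WithLp.equiv 2 (Fin 6 → ℝ)) (cliffordD1 p w t)) t := by
    rw [hasDerivAt_pi]
    intro i
    fin_cases i
    · exact aux_cos (p 0) (w 0) t
    · exact aux_sin (p 0) (w 0) t
    · exact aux_cos (p 1) (w 1) t
    · exact aux_sin (p 1) (w 1) t
    · exact aux_cos (p 2) (w 2) t
    · exact aux_sin (p 2) (w 2) t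
  exact ((PiLp.continuousLinearEquiv 2 ℝ (fun _ : Fin 6 => ℝ)).symm.hasFDerivAt.comp_hasDerivAt
    t key)

lemma hasDerivAt_curve2 (p w : EuclideanSpace ℝ (Fin 3)) (t : ℝ) :
    HasDerivAt (cliffordD1 p w) (cliffordD2 p w t) t := by
  have key : HasDerivAt
      (fun s : ℝ => (WithLp.equiv 2 (Fin 6 → ℝ)) (cliffordD1 p w s))
      ((WithLp.equiv 2 (Fin 6 → ℝ)) (cliffordD2 p w t)) t := by
    rw [hasDerivAt_pi]
    intro i
    fin_cases i
    · exact aux2_sin (p 0) (w 0) t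
    · exact aux2_cos (p 0) (w 0) t
    · exact aux2_sin (p 1) (w 1) t
    · exact aux2_cos (p 1) (w 1) t
    · exact aux2_sin (p 2) (w 2) t
    · exact aux2_cos (p 2) (w 2) t
  exact ((PiLp.continuousLinearEquiv 2 ℝ (fun _ : Fin 6 => ℝ)).symm.hasFDerivAt.comp_hasDerivAt
    t key)

theorem cliffordMap_normal_curvature
    (p w : EuclideanSpace ℝ (Fin 3)) (hw : ‖w‖ = 1) (t : ℝ) :
    ‖deriv (deriv (fun s : ℝ => cliffordMap (p + s • w))) t‖
      = Real.sqrt (3 * (w 0 ^ 4 + w 1 ^ 4 + w 2 ^ 4)) ∧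
    (w 0 + w 1 + w 2 = 0 →
      ‖deriv (deriv (fun s : ℝ => cliffordMap (p + s • w))) t‖
        = Real.sqrt (3 / 2)) := by
  have hd1 : deriv (fun s : ℝ => cliffordMap (p + s • w)) = cliffordD1 p w := by
    funext s
    exact (hasDerivAt_curve p w s).deriv
  have hd2 : deriv (deriv (fun s : ℝ => cliffordMap (p + s • w))) t = cliffordD2 p w t := by
    rw [hd1]
    exact (hasDerivAt_curve2 p w t).deriv
  have hsum : w 0 ^ 2 + w 1 ^ 2 + w 2 ^ 2 = 1 := by
    have := hw
    rw [EuclideanSpace.norm_eq] at this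
    have h2 : ∑ i : Fin 3, ‖w i‖ ^ 2 = 1 := by
      have h3 : (0:ℝ) ≤ ∑ i : Fin 3, ‖w i‖ ^ 2 := by positivity
      nlinarith [Real.sq_sqrt h3, this]
    simpa [Fin.sum_univ_three, Real.norm_eq_abs, sq_abs] using h2
  have hnorm : ‖cliffordD2 p w t‖
      = Real.sqrt (3 * (w 0 ^ 4 + w 1 ^ 4 + w 2 ^ 4)) := by
    rw [EuclideanSpace.norm_eq]
    congr 1
    simp [cliffordD2, Fin.sum_univ_six, sq_abs, vec6_five]
    have h3 : Real.sqrt 3 ^ 2 = 3 := Real.sq_sqrt (by norm_num)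
    linear_combination
      Real.sqrt 3 ^ 2 * w 0 ^ 4 * Real.sin_sq_add_cos_sq (Real.sqrt 3 * (p 0 + t * w 0)) +
      Real.sqrt 3 ^ 2 * w 1 ^ 4 * Real.sin_sq_add_cos_sq (Real.sqrt 3 * (p 1 + t * w 1)) +
      Real.sqrt 3 ^ 2 * w 2 ^ 4 * Real.sin_sq_add_cos_sq (Real.sqrt 3 * (p 2 + t * w 2)) +
      (w 0 ^ 4 + w 1 ^ 4 + w 2 ^ 4) * h3
  constructor
  · rw [hd2, hnorm]
  · intro h0
    rw [hd2, hnorm]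
    have hc : w 2 = -(w 0 + w 1) := by linarith
    have : w 0 ^ 4 + w 1 ^ 4 + w 2 ^ 4 = 1 / 2 := by
      rw [hc] at hsum ⊢
      linear_combination (w 0 ^ 2 + w 0 * w 1 + w 1 ^ 2 + 1 / 2) * hsum
    rw [this]
    norm_num
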